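/- Let X be a Banach space, Y a normed space, and T : X → Y a bounded linear operator. Suppose there exist a constant K > 0 and 0 < ε < 1 such that B_Y ⊆ K·T(B_X) + ε·B_Y, where B_X and B_Y denote the closed unit balls. Then T is a surjective open map, and Y is complete. -/

import Mathlib

-- key lifting lemma
theorem key_lift {𝕜 X Y : Type*} [RCLike 𝕜]
    [NormedAddCommGroup X] [NormedSpace 𝕜 X] [CompleteSpace X]
    [NormedAddCommGroup Y] [NormedSpace 𝕜 Y]
    (T : X →L[𝕜] Y) (K ε : ℝ) (hK : 0 < K) (hε0 : 0 < ε) (hε1 : ε < 1)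
    (h : Metric.closedBall (0 : Y) 1 ⊆
        {z : Y | ∃ x ∈ Metric.closedBall (0 : X) 1, ∃ y ∈ Metric.closedBall (0 : Y) 1,
          z = (K : 𝕜) • T x + (ε : 𝕜) • y}) :
    ∀ y : Y, ‖y‖ ≤ 1 → ∃ x : X, T x = y ∧ ‖x‖ ≤ K / (1 - ε) := by
  classical
  have hsel : ∀ y : Y, ∃ p : X × Y, ‖y‖ ≤ 1 →
      ‖p.1‖ ≤ 1 ∧ ‖p.2‖ ≤ 1 ∧ y = (K : 𝕜) • T p.1 + (ε : 𝕜) • p.2 := by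
    intro y
    by_cases hy : ‖y‖ ≤ 1
    · obtain ⟨x, hx, y', hy', hEq⟩ := h (by simpa [Metric.mem_closedBall, dist_zero_right] using hy)
      refine ⟨(x, y'), fun _ => ⟨?_, ?_, hEq⟩⟩
      · simpa [Metric.mem_closedBall, dist_zero_right] using hx
      · simpa [Metric.mem_closedBall, dist_zero_right] using hy'
    · exact ⟨(0, 0), fun hy' => absurd hy' hy⟩
  choose f hf using hsel
  intro y hy
  -- iterated sequence
  set u : ℕ → Y := fun n => Nat.rec y (fun _ z => (f z).2) n with hu_def
  have hu0 : u 0 = y := rfl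
  have husucc : ∀ n, u (n + 1) = (f (u n)).2 := fun n => rfl
  have hub : ∀ n, ‖u n‖ ≤ 1 := by
    intro n
    induction n with
    | zero => exact hy
    | succ n ih =>
      rw [husucc]
      exact ((hf (u n)) ih).2.1
  set x : ℕ → X := fun n => (f (u n)).1 with hx_def
  have hxb : ∀ n, ‖x n‖ ≤ 1 := fun n => ((hf (u n)) (hub n)).1
  have hrec : ∀ n, u n = (K : 𝕜) • T (x n) + (ε : 𝕜) • u (n + 1) :=
    fun n => ((hf (u n)) (hub n)).2.2
  -- the series terms
  set S : ℕ → X := fun k => ((ε : 𝕜)) ^ k • ((K : 𝕜)) • x k with hS_def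
  have hnormS : ∀ k, ‖S k‖ ≤ K * ε ^ k := by
    intro k
    have : ‖S k‖ = ε ^ k * (K * ‖x k‖) := by
      simp [hS_def, norm_smul, abs_of_pos hε0, abs_of_pos hK]
    rw [this]
    calc ε ^ k * (K * ‖x k‖) ≤ ε ^ k * (K * 1) := by
          apply mul_le_mul_of_nonneg_left (by nlinarith [hxb k]) (by positivity)
      _ = K * ε ^ k := by ring
  have hgeom : Summable (fun k => K * ε ^ k) :=
    (summable_geometric_of_lt_one hε0.le hε1).mul_left K
  have hSsum : Summable S := Summable.of_norm_bounded hgeom hnormS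
  -- partial sums identity
  have hpart : ∀ n, ∑ k ∈ Finset.range n, T (S k) = y - ((ε : 𝕜)) ^ n • u n := by
    intro n
    induction n with
    | zero => simp [hu0]
    | succ n ih =>
      rw [Finset.sum_range_succ, ih]
      have := hrec n
      have h2 : ((ε : 𝕜)) ^ n • u n
          = ((ε : 𝕜)) ^ n • ((K : 𝕜) • T (x n)) + ((ε : 𝕜)) ^ (n + 1) • u (n + 1) := by
        rw [this, smul_add]
        module
      have h3 : T (S n) = ((ε : 𝕜)) ^ n • ((K : 𝕜) • T (x n)) := by
        simp [hS_def, map_smul]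
      rw [h3, h2]
      abel
  -- limit of partial sums is y
  have hlim : Filter.Tendsto (fun n => ∑ k ∈ Finset.range n, T (S k)) Filter.atTop (nhds y) := by
    have h0 : Filter.Tendsto (fun n => ((ε : 𝕜)) ^ n • u n) Filter.atTop (nhds (0 : Y)) := by
      apply squeeze_zero_norm (a := fun n => ε ^ n)
      · intro n
        have : ‖((ε : 𝕜)) ^ n • u n‖ = ε ^ n * ‖u n‖ := by
          simp [norm_smul, abs_of_pos hε0]
        rw [this]
        nlinarith [hub n, pow_pos hε0 n, pow_nonneg hε0.le n]
      · exact tendsto_pow_atTop_nhds_zero_of_lt_one hε0.le hε1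
    have := Filter.Tendsto.sub (tendsto_const_nhds (x := y)) h0
    simpa using this.congr (fun n => (hpart n).symm)
  refine ⟨∑' k, S k, ?_, ?_⟩
  · have hmap : T (∑' k, S k) = ∑' k, T (S k) := T.map_tsum hSsum
    have hTS : Summable (fun k => T (S k)) := hSsum.map T T.continuous
    have := hTS.hasSum.tendsto_sum_nat
    rw [hmap]
    exact tendsto_nhds_unique this hlim
  · calc ‖∑' k, S k‖ ≤ ∑' k, K * ε ^ k := tsum_of_norm_bounded hgeom.hasSum hnormS
      _ = K * (1 - ε)⁻¹ := by
          rw [tsum_mul_left, tsum_geometric_of_lt_one hε0.le hε1]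
      _ = K / (1 - ε) := by rw [div_eq_mul_inv]

theorem stmt_0 {𝕜 X Y : Type*} [RCLike 𝕜]
    [NormedAddCommGroup X] [NormedSpace 𝕜 X] [CompleteSpace X]
    [NormedAddCommGroup Y] [NormedSpace 𝕜 Y]
    (T : X →L[𝕜] Y) (K ε : ℝ) (hK : 0 < K) (hε0 : 0 < ε) (hε1 : ε < 1)
    (h : Metric.closedBall (0 : Y) 1 ⊆
        {z : Y | ∃ x ∈ Metric.closedBall (0 : X) 1, ∃ y ∈ Metric.closedBall (0 : Y) 1,
          z = (K : 𝕜) • T x + (ε : 𝕜) • y}) :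
    Function.Surjective T ∧ IsOpenMap T ∧ CompleteSpace Y := by
  have key := key_lift T K ε hK hε0 hε1 h
  set C : ℝ := K / (1 - ε) with hC_def
  have hC : 0 < C := div_pos hK (by linarith)
  -- general controlled lifting
  have lift : ∀ y : Y, ∃ x : X, T x = y ∧ ‖x‖ ≤ C * ‖y‖ := by
    intro y
    rcases eq_or_ne y 0 with rfl | hy0
    · exact ⟨0, by simp, by simp⟩
    · have hny : (0 : ℝ) < ‖y‖ := norm_pos_iff.mpr hy0
      set y' : Y := ((‖y‖ : 𝕜))⁻¹ • y with hy'_def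
      have hny' : ‖y'‖ ≤ 1 := by
        have : ‖y'‖ = ‖y‖⁻¹ * ‖y‖ := by
          simp [hy'_def, norm_smul, RCLike.norm_ofReal, abs_of_pos hny]
        rw [this, inv_mul_cancel₀ hny.ne']
      obtain ⟨x', hx'eq, hx'n⟩ := key y' hny'
      refine ⟨(‖y‖ : 𝕜) • x', ?_, ?_⟩
      · rw [map_smul, hx'eq, hy'_def, smul_smul, mul_inv_cancel₀, one_smul]
        exact_mod_cast hny.ne'
      · have : ‖(‖y‖ : 𝕜) • x'‖ = ‖y‖ * ‖x'‖ := by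
          simp [norm_smul, RCLike.norm_ofReal, abs_of_pos hny]
        rw [this]
        calc ‖y‖ * ‖x'‖ ≤ ‖y‖ * C := by nlinarith
          _ = C * ‖y‖ := mul_comm _ _
  have hsurj : Function.Surjective T := fun y => ⟨(lift y).choose, (lift y).choose_spec.1⟩
  refine ⟨hsurj, ?_, ?_⟩
  · -- open map
    intro U hU
    rw [Metric.isOpen_iff]
    rintro _ ⟨x₀, hx₀U, rfl⟩
    obtain ⟨δ, hδ, hball⟩ := Metric.isOpen_iff.mp hU x₀ hx₀U
    refine ⟨δ / C, by positivity, ?_⟩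
    intro y' hy'
    rw [Metric.mem_ball, dist_eq_norm] at hy'
    obtain ⟨x, hTx, hxn⟩ := lift (y' - T x₀)
    refine ⟨x₀ + x, hball ?_, by rw [map_add, hTx]; abel⟩
    rw [Metric.mem_ball, dist_eq_norm]
    have : ‖x₀ + x - x₀‖ = ‖x‖ := by rw [add_sub_cancel_left]
    rw [this]
    calc ‖x‖ ≤ C * ‖y' - T x₀‖ := hxn
      _ < C * (δ / C) := by exact mul_lt_mul_of_pos_left hy' hC
      _ = δ := by field_simp
  · -- completeness
    refine Metric.complete_of_convergent_controlled_sequences (fun n => (1 / 2) ^ n)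
      (fun n => by positivity) ?_
    intro u hu
    have hd : ∀ n, ‖u (n + 1) - u n‖ < (1 / 2) ^ n := by
      intro n
      have := hu n (n + 1) n (by omega) le_rfl
      rwa [dist_eq_norm] at this
    have hlifts : ∀ n, ∃ x : X, T x = u (n + 1) - u n ∧ ‖x‖ ≤ C * ‖u (n + 1) - u n‖ :=
      fun n => lift _
    choose v hv1 hv2 using hlifts
    have hvb : ∀ n, ‖v n‖ ≤ C * (1 / 2) ^ n := by
      intro n
      calc ‖v n‖ ≤ C * ‖u (n + 1) - u n‖ := hv2 n
        _ ≤ C * (1 / 2) ^ n := mul_le_mul_of_nonneg_left (hd n).le hC.le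
    have hvsum : Summable v := by
      apply Summable.of_norm_bounded ((summable_geometric_of_lt_one (by norm_num)
        (by norm_num : (1:ℝ)/2 < 1)).mul_left C) hvb
    refine ⟨u 0 + T (∑' n, v n), ?_⟩
    have htel : ∀ n, ∑ k ∈ Finset.range n, T (v k) = u n - u 0 := by
      intro n
      have : ∀ k, T (v k) = u (k + 1) - u k := hv1
      simp only [this]
      exact Finset.sum_range_sub u n
    have hts : Filter.Tendsto (fun n => ∑ k ∈ Finset.range n, v k) Filter.atTop
        (nhds (∑' n, v n)) := hvsum.hasSum.tendsto_sum_nat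
    have h2 : Filter.Tendsto (fun n => u 0 + T (∑ k ∈ Finset.range n, v k)) Filter.atTop
        (nhds (u 0 + T (∑' n, v n))) :=
      Filter.Tendsto.const_add _ ((T.continuous.tendsto _).comp hts)
    apply h2.congr
    intro n
    rw [map_sum, htel]
    abel
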